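/- Graeffe root-squaring step: let b ∈ ℂ[z] be a nonzero polynomial. Then there exists a unique polynomial b₁ ∈ ℂ[z] with b₁(z²) = b(z)·b(−z) for all z; it satisfies deg b₁ = deg b, the multiset of roots of b₁ is the image of the multiset of roots of b under the map z ↦ z², and the number of roots of b₁ of modulus less than 1, counted with multiplicity, equals the number of roots of b of modulus less than 1, counted with multiplicity. -/

import Mathlib

open Polynomial

noncomputable section

theorem stmt_13 (b : Polynomial ℂ) (hb : b ≠ 0) :
    ∃ b₁ : Polynomial ℂ,
      b₁.comp (X ^ 2) = b * b.comp (-X) ∧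
      (∀ c : Polynomial ℂ, c.comp (X ^ 2) = b * b.comp (-X) → c = b₁) ∧
      b₁.natDegree = b.natDegree ∧
      b₁.roots = b.roots.map (fun z : ℂ => z ^ 2) ∧
      Multiset.card (b₁.roots.filter fun z => ‖z‖ < 1) =
        Multiset.card (b.roots.filter fun z => ‖z‖ < 1) := by
  have hsp : b.Splits := IsAlgClosed.splits b
  have hfact := hsp.eq_prod_roots
  have hcard : b.roots.card = b.natDegree := (splits_iff_card_roots).mp hsp
  have ha0 : b.leadingCoeff ≠ 0 := leadingCoeff_ne_zero.mpr hb
  have hmap : (b.roots.map (fun r => X - C (r^2)))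
      = (b.roots.map (fun z : ℂ => z^2)).map (fun z => X - C z) := by
    rw [Multiset.map_map]; rfl
  have hmain : (C ((-1)^b.natDegree * b.leadingCoeff^2) *
      (b.roots.map (fun r => X - C (r^2))).prod).comp (X ^ 2) = b * b.comp (-X) := by
    conv_rhs => rw [hfact, mul_comp, C_comp, multiset_prod_comp, Multiset.map_map]
    conv_lhs => rw [mul_comp, C_comp, multiset_prod_comp, Multiset.map_map]
    simp only [Function.comp, sub_comp, X_comp, C_comp]
    rw [mul_mul_mul_comm, ← C_mul, ← Multiset.prod_map_mul]
    have : (b.roots.map fun r => (X - C r) * (-X - C r)).prod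
        = (b.roots.map fun r => C (-1 : ℂ) * ((X:ℂ[X])^2 - C (r^2))).prod := by
      congr 1; apply Multiset.map_congr rfl; intro r _
      simp only [map_neg, map_one, map_pow]; ring
    rw [this, Multiset.prod_map_mul, Multiset.map_const', Multiset.prod_replicate,
      ← C_pow, hcard, C_mul]
    rw [mul_assoc, mul_left_comm, sq]
  refine ⟨_, hmain, ?_, ?_, ?_, ?_⟩
  · intro c hc
    have hcomp := hc.trans hmain.symm
    apply Polynomial.funext
    intro w
    obtain ⟨z, hz⟩ := IsAlgClosed.exists_pow_nat_eq w (n := 2) (by norm_num)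
    have := congrArg (eval z) hcomp
    simpa [eval_comp, hz] using this
  · rw [natDegree_C_mul (by simp [ha0]), hmap,
      natDegree_multiset_prod_X_sub_C_eq_card, Multiset.card_map, hcard]
  · rw [roots_C_mul _ (by simp [ha0]), hmap]
    exact roots_multiset_prod_X_sub_C _
  · rw [roots_C_mul _ (by simp [ha0]), hmap, roots_multiset_prod_X_sub_C]
    rw [Multiset.filter_map, Multiset.card_map]
    congr 1
    apply Multiset.filter_congr
    intro z _
    simp only [Function.comp, map_pow, norm_pow]
    exact ⟨fun h => (pow_lt_one_iff_of_nonneg (norm_nonneg z) two_ne_zero).mp h,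
      fun h => (pow_lt_one_iff_of_nonneg (norm_nonneg z) two_ne_zero).mpr h⟩
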